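/- For every positive integer k, the minimum cardinality of an odd cover of the complete graph satisfies b₂(K_{8k-1}) = 4k, b₂(K_{8k}) = 4k, and b₂(K_{8k+1}) = 4k + 1. -/

import Mathlib

open scoped Classical

/-- A list of bicliques `B 0, …, B (k-1)` (each given by a pair of disjoint
vertex subsets) is an *odd cover* of `G` if two distinct vertices are adjacent
in `G` exactly when they lie in opposite parts of an odd number of the bicliques. -/
def IsOddCover {V : Type*} [Fintype V] (G : SimpleGraph V) {k : ℕ}
    (B : Fin k → Finset V × Finset V) : Prop :=
  (∀ i, Disjoint (B i).1 (B i).2) ∧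
  ∀ u v : V, u ≠ v →
    (G.Adj u v ↔ Odd (Finset.univ.filter (fun i : Fin k =>
      (u ∈ (B i).1 ∧ v ∈ (B i).2) ∨ (u ∈ (B i).2 ∧ v ∈ (B i).1))).card)

/-- `b2 G` is the minimum cardinality of an odd cover of `G`. -/
noncomputable def b2 {V : Type*} [Fintype V] (G : SimpleGraph V) : ℕ :=
  sInf {k : ℕ | ∃ B : Fin k → Finset V × Finset V, IsOddCover G B}

/-- `r2 G` is the rank of the adjacency matrix of `G` over `𝔽₂`. -/
noncomputable def r2 {V : Type*} [Fintype V] (G : SimpleGraph V) : ℕ :=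
  (Matrix.of fun u v : V => if G.Adj u v then (1 : ZMod 2) else 0).rank


namespace OddAux

open Finset

/-- two-element-field indicator -/
def splitP {V : Type*} (C : Finset V × Finset V) (u v : V) : Prop :=
  (u ∈ C.1 ∧ v ∈ C.2) ∨ (u ∈ C.2 ∧ v ∈ C.1)

lemma splitP_comm {V : Type*} (C : Finset V × Finset V) (u v : V) :
    splitP C u v ↔ splitP C v u := by
  unfold splitP; tauto

/-- general-index cover property -/
def Good {V ι : Type*} [Fintype V] [Fintype ι] (C : ι → Finset V × Finset V) : Prop :=
  (∀ i, Disjoint (C i).1 (C i).2) ∧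
  ∀ u v : V, u ≠ v → (∑ i, if splitP (C i) u v then (1 : ZMod 2) else 0) = 1

lemma odd_iff_cast (c : ℕ) : Odd c ↔ (c : ZMod 2) = 1 := by
  rw [Nat.odd_iff, ← ZMod.natCast_mod c 2]
  rcases Nat.mod_two_eq_zero_or_one c with h | h <;> rw [h] <;> simp

lemma odd_card_filter_iff {ι : Type*} [Fintype ι] (p : ι → Prop) [DecidablePred p] :
    Odd (Finset.univ.filter p).card ↔ (∑ i, if p i then (1 : ZMod 2) else 0) = 1 := by
  rw [odd_iff_cast, Finset.sum_boole]

lemma sum_ite_congr' {ι : Type*} [Fintype ι] {p q : ι → Prop} {_ : DecidablePred p}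
    {_ : DecidablePred q} (h : ∀ i, p i ↔ q i) :
    (∑ i, if p i then (1 : ZMod 2) else 0) = ∑ i, if q i then (1 : ZMod 2) else 0 :=
  Finset.sum_congr rfl fun i _ => if_congr (h i) rfl rfl

lemma isOddCover_top_iff {n m : ℕ} (B : Fin m → Finset (Fin n) × Finset (Fin n)) :
    IsOddCover (⊤ : SimpleGraph (Fin n)) B ↔ Good B := by
  unfold IsOddCover Good
  refine and_congr Iff.rfl ?_
  refine forall_congr' fun u => forall_congr' fun v => forall_congr' fun huv => ?_
  rw [SimpleGraph.top_adj, odd_card_filter_iff, iff_true_left huv]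
  exact iff_of_eq (congrArg (· = 1) (sum_ite_congr' fun i => Iff.rfl))

lemma mem_map_some {V : Type*} (s : Finset V) (x : V) :
    some x ∈ s.map Function.Embedding.some ↔ x ∈ s := by
  exact Finset.mem_map' Function.Embedding.some

lemma none_not_mem_map_some {V : Type*} (s : Finset V) :
    (none : Option V) ∉ s.map Function.Embedding.some := by
  rw [Finset.mem_map]
  rintro ⟨b, _, hb⟩
  exact Option.some_ne_none b hb

lemma Good.reindex {V ι κ : Type*} [Fintype V] [Fintype ι] [Fintype κ]
    {C : ι → Finset V × Finset V} (h : Good C) (e : κ ≃ ι) : Good (C ∘ e) := by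
  refine ⟨fun i => h.1 (e i), fun u v huv => ?_⟩
  refine Eq.trans ?_ (h.2 u v huv)
  exact Fintype.sum_equiv e _ _ fun i => if_congr Iff.rfl rfl rfl

lemma Good.vmap {V W ι : Type*} [Fintype V] [Fintype W] [Fintype ι]
    {C : ι → Finset V × Finset V} (h : Good C) (e : V ≃ W) :
    Good (fun i => ((C i).1.map e.toEmbedding, (C i).2.map e.toEmbedding)) := by
  constructor
  · intro i
    rw [Finset.disjoint_map]
    exact h.1 i
  · intro u v huv
    have huv' : e.symm u ≠ e.symm v := fun hh => huv (by
      have := congrArg e hh; simpa using this)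
    refine Eq.trans ?_ (h.2 (e.symm u) (e.symm v) huv')
    refine Finset.sum_congr rfl fun i _ => if_congr ?_ rfl rfl
    unfold splitP
    simp only [Finset.mem_map_equiv]

lemma Good.comap {V W ι : Type*} [Fintype V] [Fintype W] [Fintype ι]
    {C : ι → Finset V × Finset V} (h : Good C) (f : W ↪ V) :
    Good (fun i => (Finset.univ.filter (fun w => f w ∈ (C i).1),
                    Finset.univ.filter (fun w => f w ∈ (C i).2))) := by
  constructor
  · intro i
    rw [Finset.disjoint_left]
    intro a ha hb
    rw [Finset.mem_filter] at ha hb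
    exact Finset.disjoint_left.mp (h.1 i) ha.2 hb.2
  · intro u v huv
    have huv' : f u ≠ f v := fun hh => huv (f.injective hh)
    refine Eq.trans ?_ (h.2 (f u) (f v) huv')
    refine Finset.sum_congr rfl fun i _ => if_congr ?_ rfl rfl
    unfold splitP
    simp only [Finset.mem_filter, Finset.mem_univ, true_and]

lemma Good.cone {V ι : Type*} [Fintype V] [Fintype ι]
    {C : ι → Finset V × Finset V} (h : Good C) :
    Good (Sum.elim
      (fun i : ι => ((C i).1.map Function.Embedding.some, (C i).2.map Function.Embedding.some))
      (fun _ : Fin 1 => (({none} : Finset (Option V)),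
          (Finset.univ : Finset V).map Function.Embedding.some))) := by
  constructor
  · rintro (i | i)
    · exact (Finset.disjoint_map _).mpr (h.1 i)
    · simp only [Sum.elim_inr]
      rw [Finset.disjoint_left]
      intro a ha hb
      rw [Finset.mem_singleton] at ha
      rw [ha] at hb
      exact none_not_mem_map_some _ hb
  · intro u v huv
    rw [Fintype.sum_sum_type]
    simp only [Sum.elim_inl, Sum.elim_inr]
    match u, v with
    | some a, some b =>
      have hab : a ≠ b := fun hh => huv (by rw [hh])
      have e1 : (∑ i : ι, if splitP ((C i).1.map Function.Embedding.some,
            (C i).2.map Function.Embedding.some) (some a) (some b)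
            then (1 : ZMod 2) else 0) = 1 := by
        refine Eq.trans ?_ (h.2 a b hab)
        refine Finset.sum_congr rfl fun i _ => if_congr ?_ rfl rfl
        unfold splitP
        simp only [mem_map_some]
      erw [e1]; rw [Fin.sum_univ_one]
      have hns : ¬ splitP (({none} : Finset (Option V)),
          (Finset.univ : Finset V).map Function.Embedding.some) (some a) (some b) := by
        unfold splitP
        simp only [Finset.mem_singleton]
        rintro (⟨h1, -⟩ | ⟨-, h2⟩)
        · exact Option.some_ne_none a h1
        · exact Option.some_ne_none b h2
      erw [if_neg hns]; rw [add_zero]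
    | some a, none =>
      have e1 : (∑ i : ι, if splitP ((C i).1.map Function.Embedding.some,
            (C i).2.map Function.Embedding.some) (some a) (none : Option V)
            then (1 : ZMod 2) else 0) = 0 := by
        refine Finset.sum_eq_zero fun i _ => ?_
        refine if_neg ?_
        unfold splitP
        rintro (⟨-, h2⟩ | ⟨-, h2⟩) <;> exact none_not_mem_map_some _ h2
      erw [e1]; rw [Fin.sum_univ_one, zero_add]
      refine if_pos (Or.inr ⟨?_, ?_⟩)
      · exact (mem_map_some _ _).mpr (Finset.mem_univ a)
      · exact Finset.mem_singleton_self _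
    | none, some b =>
      have e1 : (∑ i : ι, if splitP ((C i).1.map Function.Embedding.some,
            (C i).2.map Function.Embedding.some) (none : Option V) (some b)
            then (1 : ZMod 2) else 0) = 0 := by
        refine Finset.sum_eq_zero fun i _ => ?_
        refine if_neg ?_
        unfold splitP
        rintro (⟨h1, -⟩ | ⟨h1, -⟩) <;> exact none_not_mem_map_some _ h1
      erw [e1]; rw [Fin.sum_univ_one, zero_add]
      refine if_pos (Or.inl ⟨?_, ?_⟩)
      · exact Finset.mem_singleton_self _
      · exact (mem_map_some _ _).mpr (Finset.mem_univ b)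
    | none, none => exact absurd rfl huv

def Xb : Fin 4 → Finset (Fin 8) := ![{0,1,2},{0,3,6},{0,5,7},{1,5,6}]
def Yb : Fin 4 → Finset (Fin 8) := ![{3,4,5},{1,4,7},{2,4,6},{2,3,7}]
def Ab : Fin 4 → Finset (Fin 8) := ![{0,1,2,6},{3,4,5,7},{0,1,2,6},{3,4,5,7}]
def Bb : Fin 4 → Finset (Fin 8) := ![{3,4,5,7},{0,1,2,6},{3,4,5,7},{0,1,2,6}]

lemma hXY : ∀ (j : Fin 4) (x : Fin 8), x ∈ Xb j → x ∈ Yb j → False := by decide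
lemma hAB : ∀ (j : Fin 4) (x : Fin 8), x ∈ Ab j → x ∈ Bb j → False := by decide

lemma D1 : ∀ a b : Fin 8, a ≠ b →
    (∑ j : Fin 4, if (a ∈ Xb j ∧ b ∈ Yb j) ∨ (a ∈ Yb j ∧ b ∈ Xb j)
      then (1 : ZMod 2) else 0) = 1 := by decide

lemma D2 : ∀ a b : Fin 8,
    (∑ j : Fin 4, if (a ∈ Bb j ∧ b ∈ Ab j) ∨ (a ∈ Ab j ∧ b ∈ Bb j)
      then (1 : ZMod 2) else 0) = 0 := by decide

lemma D2' : ∀ a b : Fin 8,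
    (∑ j : Fin 4, if (a ∈ Ab j ∧ b ∈ Bb j) ∨ (a ∈ Bb j ∧ b ∈ Ab j)
      then (1 : ZMod 2) else 0) = 0 := by decide

lemma D3 : ∀ a b : Fin 8,
    (∑ j : Fin 4, if (a ∈ Ab j ∧ b ∈ Ab j) ∨ (a ∈ Bb j ∧ b ∈ Bb j)
      then (1 : ZMod 2) else 0) = 0 := by decide

lemma D4 : ∀ a b : Fin 8,
    ((∑ j : Fin 4, if (a ∈ Xb j ∧ b ∈ Ab j) ∨ (a ∈ Yb j ∧ b ∈ Bb j)
      then (1 : ZMod 2) else 0) +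
     (∑ j : Fin 4, if (a ∈ Ab j ∧ b ∈ Yb j) ∨ (a ∈ Bb j ∧ b ∈ Xb j)
      then (1 : ZMod 2) else 0)) = 1 := by decide


def blockCover (k : ℕ) : Fin k × Fin 4 → Finset (Fin k × Fin 8) × Finset (Fin k × Fin 8) :=
  fun tj =>
    (Finset.univ.filter (fun p => (p.1 = tj.1 ∧ p.2 ∈ Xb tj.2) ∨
        (tj.1 < p.1 ∧ p.2 ∈ Bb tj.2) ∨ (p.1 < tj.1 ∧ p.2 ∈ Ab tj.2)),
     Finset.univ.filter (fun p => (p.1 = tj.1 ∧ p.2 ∈ Yb tj.2) ∨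
        (tj.1 < p.1 ∧ p.2 ∈ Ab tj.2) ∨ (p.1 < tj.1 ∧ p.2 ∈ Bb tj.2)))

lemma mem_block1 {k : ℕ} {t : Fin k} {j : Fin 4} {p : Fin k × Fin 8} :
    p ∈ (blockCover k (t, j)).1 ↔ ((p.1 = t ∧ p.2 ∈ Xb j) ∨
      (t < p.1 ∧ p.2 ∈ Bb j) ∨ (p.1 < t ∧ p.2 ∈ Ab j)) := by
  simp [blockCover]

lemma mem_block2 {k : ℕ} {t : Fin k} {j : Fin 4} {p : Fin k × Fin 8} :
    p ∈ (blockCover k (t, j)).2 ↔ ((p.1 = t ∧ p.2 ∈ Yb j) ∨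
      (t < p.1 ∧ p.2 ∈ Ab j) ∨ (p.1 < t ∧ p.2 ∈ Bb j)) := by
  simp [blockCover]

lemma key_sum (k : ℕ) (s s' : Fin k) (a b : Fin 8) (hne : (s, a) ≠ (s', b)) (hle : s ≤ s') :
    (∑ i : Fin k × Fin 4, if splitP (blockCover k i) (s, a) (s', b)
      then (1 : ZMod 2) else 0) = 1 := by
  rw [Fintype.sum_prod_type]
  rcases eq_or_lt_of_le hle with heq | hlt
  · -- same block
    subst heq
    have hab : a ≠ b := by
      intro hh; exact hne (by rw [hh])
    have hinner : ∀ t : Fin k,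
        (∑ j : Fin 4, if splitP (blockCover k (t, j)) (s, a) (s, b)
          then (1 : ZMod 2) else 0) = if t = s then 1 else 0 := by
      intro t
      by_cases ht : t = s
      · subst ht
        rw [if_pos rfl]
        have hiff : ∀ j : Fin 4, splitP (blockCover k (t, j)) (t, a) (t, b) ↔
            ((a ∈ Xb j ∧ b ∈ Yb j) ∨ (a ∈ Yb j ∧ b ∈ Xb j)) := by
          intro j
          unfold splitP
          simp only [mem_block1, mem_block2]
          simp [lt_irrefl]
        exact Eq.trans (Finset.sum_congr rfl fun j _ => if_congr (hiff j) rfl rfl) (D1 a b hab)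
      · rw [if_neg ht]
        rcases lt_or_gt_of_ne ht with h1 | h1
        · -- t < s : both vertices in a "later" block
          have hiff : ∀ j : Fin 4, splitP (blockCover k (t, j)) (s, a) (s, b) ↔
              ((a ∈ Bb j ∧ b ∈ Ab j) ∨ (a ∈ Ab j ∧ b ∈ Bb j)) := by
            intro j
            unfold splitP
            simp only [mem_block1, mem_block2]
            simp [h1, h1.ne', asymm h1]
          exact Eq.trans (Finset.sum_congr rfl fun j _ => if_congr (hiff j) rfl rfl) (D2 a b)
        · -- s < t : both vertices in an "earlier" block
          have hiff : ∀ j : Fin 4, splitP (blockCover k (t, j)) (s, a) (s, b) ↔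
              ((a ∈ Ab j ∧ b ∈ Bb j) ∨ (a ∈ Bb j ∧ b ∈ Ab j)) := by
            intro j
            unfold splitP
            simp only [mem_block1, mem_block2]
            simp [h1, h1.ne, asymm h1]
          exact Eq.trans (Finset.sum_congr rfl fun j _ => if_congr (hiff j) rfl rfl) (D2' a b)
    rw [Finset.sum_congr rfl fun t _ => hinner t]
    rw [Finset.sum_ite_eq' Finset.univ s (fun _ => (1 : ZMod 2))]
    simp
  · -- s < s'
    have hinner : ∀ t : Fin k,
        (∑ j : Fin 4, if splitP (blockCover k (t, j)) (s, a) (s', b)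
          then (1 : ZMod 2) else 0) =
        (if t = s then
          (∑ j : Fin 4, if (a ∈ Xb j ∧ b ∈ Ab j) ∨ (a ∈ Yb j ∧ b ∈ Bb j)
            then (1 : ZMod 2) else 0) else 0) +
        (if t = s' then
          (∑ j : Fin 4, if (a ∈ Ab j ∧ b ∈ Yb j) ∨ (a ∈ Bb j ∧ b ∈ Xb j)
            then (1 : ZMod 2) else 0) else 0) := by
      intro t
      by_cases ht1 : t = s
      · subst ht1
        rw [if_pos rfl, if_neg hlt.ne, add_zero]
        have hiff : ∀ j : Fin 4, splitP (blockCover k (t, j)) (t, a) (s', b) ↔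
            ((a ∈ Xb j ∧ b ∈ Ab j) ∨ (a ∈ Yb j ∧ b ∈ Bb j)) := by
          intro j
          unfold splitP
          simp only [mem_block1, mem_block2]
          simp [lt_irrefl, hlt, hlt.ne', asymm hlt]
        exact Finset.sum_congr rfl fun j _ => if_congr (hiff j) rfl rfl
      · rw [if_neg ht1]
        by_cases ht2 : t = s'
        · subst ht2
          rw [if_pos rfl, zero_add]
          have hst : s < t := hlt
          have hiff : ∀ j : Fin 4, splitP (blockCover k (t, j)) (s, a) (t, b) ↔
              ((a ∈ Ab j ∧ b ∈ Yb j) ∨ (a ∈ Bb j ∧ b ∈ Xb j)) := by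
            intro j
            unfold splitP
            simp only [mem_block1, mem_block2]
            simp [lt_irrefl, hst, hst.ne, asymm hst]
          exact Finset.sum_congr rfl fun j _ => if_congr (hiff j) rfl rfl
        · rw [if_neg ht2, add_zero]
          rcases lt_or_gt_of_ne ht1 with h1 | h1
          · -- t < s < s' : both later
            have h2 : t < s' := h1.trans hlt
            have hiff : ∀ j : Fin 4, splitP (blockCover k (t, j)) (s, a) (s', b) ↔
                ((a ∈ Bb j ∧ b ∈ Ab j) ∨ (a ∈ Ab j ∧ b ∈ Bb j)) := by
              intro j
              unfold splitP
              simp only [mem_block1, mem_block2]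
              simp [h1, h1.ne', asymm h1, h2, h2.ne', asymm h2]
            exact Eq.trans (Finset.sum_congr rfl fun j _ => if_congr (hiff j) rfl rfl) (D2 a b)
          · rcases lt_or_gt_of_ne ht2 with h2 | h2
            · -- s < t < s' : u earlier, v later
              have hiff : ∀ j : Fin 4, splitP (blockCover k (t, j)) (s, a) (s', b) ↔
                  ((a ∈ Ab j ∧ b ∈ Ab j) ∨ (a ∈ Bb j ∧ b ∈ Bb j)) := by
                intro j
                unfold splitP
                simp only [mem_block1, mem_block2]
                simp [h1, h1.ne, asymm h1, h2, h2.ne', asymm h2]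
              exact Eq.trans (Finset.sum_congr rfl fun j _ => if_congr (hiff j) rfl rfl) (D3 a b)
            · -- s < s' < t : both earlier
              have h3 : s < t := hlt.trans h2
              have hiff : ∀ j : Fin 4, splitP (blockCover k (t, j)) (s, a) (s', b) ↔
                  ((a ∈ Ab j ∧ b ∈ Bb j) ∨ (a ∈ Bb j ∧ b ∈ Ab j)) := by
                intro j
                unfold splitP
                simp only [mem_block1, mem_block2]
                simp [h2, h2.ne, asymm h2, h3, h3.ne, asymm h3]
              exact Eq.trans (Finset.sum_congr rfl fun j _ => if_congr (hiff j) rfl rfl) (D2' a b)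
    rw [Finset.sum_congr rfl fun t _ => hinner t]
    rw [Finset.sum_add_distrib,
      Finset.sum_ite_eq' Finset.univ s
        (fun _ => (∑ j : Fin 4, if (a ∈ Xb j ∧ b ∈ Ab j) ∨ (a ∈ Yb j ∧ b ∈ Bb j)
          then (1 : ZMod 2) else 0)),
      Finset.sum_ite_eq' Finset.univ s'
        (fun _ => (∑ j : Fin 4, if (a ∈ Ab j ∧ b ∈ Yb j) ∨ (a ∈ Bb j ∧ b ∈ Xb j)
          then (1 : ZMod 2) else 0))]
    simpa using D4 a b

lemma good_blockCover (k : ℕ) : Good (blockCover k) := by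
  constructor
  · rintro ⟨t, j⟩
    rw [Finset.disjoint_left]
    intro p hp1 hp2
    rw [mem_block1] at hp1
    rw [mem_block2] at hp2
    rcases hp1 with ⟨e1, m1⟩ | ⟨l1, m1⟩ | ⟨l1, m1⟩ <;>
      rcases hp2 with ⟨e2, m2⟩ | ⟨l2, m2⟩ | ⟨l2, m2⟩
    · exact hXY j p.2 m1 m2
    · exact absurd (e1 ▸ l2) (lt_irrefl t)
    · exact absurd (e1 ▸ l2) (lt_irrefl t)
    · exact absurd (e2 ▸ l1) (lt_irrefl t)
    · exact hAB j p.2 m2 m1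
    · exact absurd (l1.trans l2) (lt_irrefl _)
    · exact absurd (e2 ▸ l1) (lt_irrefl t)
    · exact absurd (l1.trans l2) (lt_irrefl _)
    · exact hAB j p.2 m1 m2
  · rintro ⟨s, a⟩ ⟨s', b⟩ hne
    rcases le_total s s' with hle | hle
    · exact key_sum k s s' a b hne hle
    · have hne' : (s', b) ≠ (s, a) := fun hh => hne hh.symm
      refine Eq.trans ?_ (key_sum k s' s b a hne' hle)
      refine Finset.sum_congr rfl fun i _ => if_congr (splitP_comm _ _ _) rfl rfl

section Lower

open Matrix

variable {n m : ℕ}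

/-- indicator of first side -/
def xInd (B : Fin m → Finset (Fin n) × Finset (Fin n)) (i : Fin m) : Fin n → ZMod 2 :=
  fun u => if u ∈ (B i).1 then 1 else 0

def yInd (B : Fin m → Finset (Fin n) × Finset (Fin n)) (i : Fin m) : Fin n → ZMod 2 :=
  fun u => if u ∈ (B i).2 then 1 else 0

def adjM (n : ℕ) : Matrix (Fin n) (Fin n) (ZMod 2) :=
  Matrix.of fun u v => if u = v then 0 else 1

lemma split_eq {B : Fin m → Finset (Fin n) × Finset (Fin n)} {i : Fin m}
    (hd : Disjoint (B i).1 (B i).2) (u v : Fin n) :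
    (if splitP (B i) u v then (1 : ZMod 2) else 0)
      = xInd B i u * yInd B i v + yInd B i u * xInd B i v := by
  have h1 : ∀ w, w ∈ (B i).1 → w ∉ (B i).2 := fun w hw => Finset.disjoint_left.mp hd hw
  by_cases hu1 : u ∈ (B i).1
  · have hu2 : u ∉ (B i).2 := h1 u hu1
    by_cases hv1 : v ∈ (B i).1
    · have hv2 : v ∉ (B i).2 := h1 v hv1
      simp [splitP, xInd, yInd, hu1, hu2, hv1, hv2]
    · by_cases hv2 : v ∈ (B i).2 <;> simp [splitP, xInd, yInd, hu1, hu2, hv1, hv2]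
  · by_cases hu2 : u ∈ (B i).2
    · by_cases hv1 : v ∈ (B i).1
      · have hv2 : v ∉ (B i).2 := h1 v hv1
        simp [splitP, xInd, yInd, hu1, hu2, hv1, hv2]
      · by_cases hv2 : v ∈ (B i).2 <;> simp [splitP, xInd, yInd, hu1, hu2, hv1, hv2]
    · by_cases hv1 : v ∈ (B i).1 <;> by_cases hv2 : v ∈ (B i).2 <;>
        simp [splitP, xInd, yInd, hu1, hu2, hv1, hv2]

lemma keyB {B : Fin m → Finset (Fin n) × Finset (Fin n)} (h : Good B) (u v : Fin n) :
    adjM n u v = ∑ i, (xInd B i u * yInd B i v + yInd B i u * xInd B i v) := by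
  by_cases huv : u = v
  · subst huv
    have hz : ∀ i : Fin m, xInd B i u * yInd B i u + yInd B i u * xInd B i u = 0 := by
      intro i
      have h1 : xInd B i u * yInd B i u = 0 := by
        by_cases hu1 : u ∈ (B i).1
        · have hu2 : u ∉ (B i).2 := Finset.disjoint_left.mp (h.1 i) hu1
          simp [xInd, yInd, hu1, hu2]
        · simp [xInd, hu1]
      rw [mul_comm (yInd B i u)] at *
      rw [h1, add_zero]
    rw [Finset.sum_congr rfl fun i _ => hz i]
    simp [adjM]
  · have := h.2 u v huv
    rw [Finset.sum_congr rfl fun i _ => split_eq (h.1 i) u v] at this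
    rw [this]
    simp [adjM, huv]

lemma keyC {B : Fin m → Finset (Fin n) × Finset (Fin n)} (h : Good B) (z : Fin n → ZMod 2)
    (u : Fin n) :
    (adjM n).mulVec z u
      = ∑ i, (xInd B i u * (yInd B i ⬝ᵥ z) + yInd B i u * (xInd B i ⬝ᵥ z)) := by
  unfold Matrix.mulVec dotProduct
  calc (∑ v, adjM n u v * z v)
      = ∑ v, (∑ i, (xInd B i u * yInd B i v + yInd B i u * xInd B i v)) * z v := by
        exact Finset.sum_congr rfl fun v _ => by rw [keyB h u v]
    _ = ∑ v, ∑ i, (xInd B i u * yInd B i v + yInd B i u * xInd B i v) * z v := by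
        exact Finset.sum_congr rfl fun v _ => Finset.sum_mul _ _ _
    _ = ∑ i, ∑ v, (xInd B i u * yInd B i v + yInd B i u * xInd B i v) * z v :=
        Finset.sum_comm
    _ = ∑ i, (xInd B i u * (∑ v, yInd B i v * z v) + yInd B i u * (∑ v, xInd B i v * z v)) := by
        refine Finset.sum_congr rfl fun i _ => ?_
        rw [Finset.mul_sum, Finset.mul_sum, ← Finset.sum_add_distrib]
        refine Finset.sum_congr rfl fun v _ => by ring

lemma mulVec_adjM (z : Fin n → ZMod 2) (u : Fin n) :
    (adjM n).mulVec z u = (∑ v, z v) + z u := by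
  unfold Matrix.mulVec dotProduct
  have : ∀ v : Fin n, adjM n u v * z v = z v + (if u = v then z v else 0) := by
    intro v
    by_cases huv : u = v
    · subst huv
      simp [adjM, CharTwo.add_self_eq_zero]
    · simp [adjM, huv]
  rw [Finset.sum_congr rfl fun v _ => this v, Finset.sum_add_distrib,
    Finset.sum_ite_eq Finset.univ u z]
  simp

end Lower

section Lower2

open Matrix Module Submodule

variable {n m : ℕ} {B : Fin m → Finset (Fin n) × Finset (Fin n)}

/-- the family of side indicator vectors -/
def vfam (B : Fin m → Finset (Fin n) × Finset (Fin n)) : Fin m ⊕ Fin m → (Fin n → ZMod 2) :=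
  Sum.elim (xInd B) (yInd B)

lemma range_le_span (h : Good B) :
    LinearMap.range (adjM n).mulVecLin ≤ span (ZMod 2) (Set.range (vfam B)) := by
  rintro w ⟨z, rfl⟩
  have hw : (adjM n).mulVecLin z
      = ∑ i : Fin m ⊕ Fin m,
          (Sum.elim (fun i => yInd B i ⬝ᵥ z) (fun i => xInd B i ⬝ᵥ z) i) • vfam B i := by
    funext u
    rw [Matrix.mulVecLin_apply, keyC h z u, Fintype.sum_sum_type]
    simp only [Pi.add_apply, Finset.sum_apply, Pi.smul_apply, smul_eq_mul,
      Sum.elim_inl, Sum.elim_inr, vfam]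
    rw [← Finset.sum_add_distrib]
    exact Finset.sum_congr rfl fun i _ => by ring
  rw [hw]
  exact Submodule.sum_smul_mem _ _ fun i _ => Submodule.subset_span ⟨i, rfl⟩

lemma finrank_span_vfam_le : finrank (ZMod 2) (span (ZMod 2) (Set.range (vfam B))) ≤ 2 * m := by
  have := finrank_range_le_card (R := ZMod 2) (vfam B)
  rw [Set.finrank] at this
  refine this.trans ?_
  simp [Fintype.card_sum]
  omega

lemma adjM_ker_even (hn : Even n) : LinearMap.ker (adjM n).mulVecLin = ⊥ := by
  rw [LinearMap.ker_eq_bot']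
  intro z hz
  have hz' : ∀ u, (∑ v, z v) + z u = 0 := by
    intro u
    rw [← mulVec_adjM z u]
    exact congrFun hz u
  have hu : ∀ u, z u = ∑ v, z v := by
    intro u
    have h2 := hz' u
    have h3 : z u + ((∑ v, z v) + z u) = z u + 0 := by rw [h2]
    rw [add_zero, ← add_assoc, add_comm (z u), add_assoc, CharTwo.add_self_eq_zero,
      add_zero] at h3
    exact h3.symm
  have hS : (∑ v, z v) = 0 := by
    calc (∑ v, z v) = ∑ _v : Fin n, (∑ v, z v) := Finset.sum_congr rfl fun v _ => hu v
      _ = (n : ZMod 2) * (∑ v, z v) := by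
          rw [Finset.sum_const, Finset.card_univ, Fintype.card_fin, nsmul_eq_mul]
      _ = 0 := by
          obtain ⟨l, hl⟩ := hn
          have : (n : ZMod 2) = 0 := by
            rw [ZMod.natCast_eq_zero_iff]
            omega
          rw [this, zero_mul]
  funext u
  rw [hu u, hS]
  rfl

lemma adjM_ker_odd (hn : Odd n) :
    LinearMap.ker (adjM n).mulVecLin = span (ZMod 2) {(fun _ => 1 : Fin n → ZMod 2)} := by
  have hcast : (n : ZMod 2) = 1 := by
    obtain ⟨l, hl⟩ := hn
    subst hl
    push_cast
    rw [show (2 : ZMod 2) = 0 by decide]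
    ring
  apply le_antisymm
  · intro z hz
    rw [LinearMap.mem_ker] at hz
    have hz' : ∀ u, (∑ v, z v) + z u = 0 := by
      intro u
      rw [← mulVec_adjM z u]
      exact congrFun hz u
    have hu : ∀ u, z u = ∑ v, z v := by
      intro u
      have h2 := hz' u
      have h3 : z u + ((∑ v, z v) + z u) = z u + 0 := by rw [h2]
      rw [add_zero, ← add_assoc, add_comm (z u), add_assoc, CharTwo.add_self_eq_zero,
        add_zero] at h3
      exact h3.symm
    rw [Submodule.mem_span_singleton]
    exact ⟨∑ v, z v, by funext u; rw [Pi.smul_apply, smul_eq_mul, mul_one, hu u]⟩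
  · rw [Submodule.span_singleton_le_iff_mem, LinearMap.mem_ker]
    funext u
    rw [Matrix.mulVecLin_apply, mulVec_adjM]
    have : (∑ _v : Fin n, (1 : ZMod 2)) = 1 := by
      rw [Finset.sum_const, Finset.card_univ, Fintype.card_fin, nsmul_eq_mul, mul_one, hcast]
    rw [this]
    rfl

lemma finrank_range_adjM_even (hn : Even n) :
    finrank (ZMod 2) (LinearMap.range (adjM n).mulVecLin) = n := by
  have h := LinearMap.finrank_range_add_finrank_ker (adjM n).mulVecLin
  rw [adjM_ker_even hn, finrank_bot, add_zero, Module.finrank_fin_fun] at h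
  exact h

lemma finrank_range_adjM_odd (hn : Odd n) (hn1 : 1 ≤ n) :
    finrank (ZMod 2) (LinearMap.range (adjM n).mulVecLin) = n - 1 := by
  have h := LinearMap.finrank_range_add_finrank_ker (adjM n).mulVecLin
  rw [adjM_ker_odd hn, Module.finrank_fin_fun] at h
  have hone : (fun _ => 1 : Fin n → ZMod 2) ≠ 0 := by
    intro hh
    have := congrFun hh ⟨0, hn1⟩
    simp at this
  rw [finrank_span_singleton hone] at h
  omega

lemma lower_even (hn : Even n) (h : Good B) : n ≤ 2 * m := by
  have h1 := range_le_span h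
  have h2 := Submodule.finrank_mono h1
  rw [finrank_range_adjM_even hn] at h2
  exact h2.trans finrank_span_vfam_le

end Lower2

section Lower3

open Matrix Module Submodule

variable {n m : ℕ} {B : Fin m → Finset (Fin n) × Finset (Fin n)}

lemma mulVec_idem (hn : Odd n) (z : Fin n → ZMod 2) :
    (adjM n).mulVec ((adjM n).mulVec z) = (adjM n).mulVec z := by
  have hcast : (n : ZMod 2) = 1 := by
    obtain ⟨l, hl⟩ := hn
    subst hl
    push_cast
    rw [show (2 : ZMod 2) = 0 by decide]
    ring
  funext u
  rw [mulVec_adjM ((adjM n).mulVec z) u]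
  have hS : (∑ v, (adjM n).mulVec z v) = 0 := by
    calc (∑ v, (adjM n).mulVec z v) = ∑ v : Fin n, ((∑ w, z w) + z v) :=
          Finset.sum_congr rfl fun v _ => mulVec_adjM z v
      _ = (∑ _v : Fin n, (∑ w, z w)) + ∑ v, z v := Finset.sum_add_distrib
      _ = (n : ZMod 2) * (∑ w, z w) + ∑ v, z v := by
          rw [Finset.sum_const, Finset.card_univ, Fintype.card_fin, nsmul_eq_mul]
      _ = 0 := by rw [hcast, one_mul, CharTwo.add_self_eq_zero]
  rw [hS, zero_add]

lemma yx_dot_zero (h : Good B) (j : Fin m) : yInd B j ⬝ᵥ xInd B j = 0 := by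
  unfold dotProduct
  refine Finset.sum_eq_zero fun u _ => ?_
  by_cases hu : u ∈ (B j).1
  · have hu2 : u ∉ (B j).2 := Finset.disjoint_left.mp (h.1 j) hu
    simp [xInd, yInd, hu2]
  · simp [xInd, hu]

lemma no_half_cover (hn : n = 2 * m + 1) (hm : 1 ≤ m) (h : Good B) : False := by
  classical
  have hodd : Odd n := ⟨m, by omega⟩
  set W := span (ZMod 2) (Set.range (vfam B)) with hW
  have h1 : LinearMap.range (adjM n).mulVecLin ≤ W := range_le_span h
  have h3 : finrank (ZMod 2) (LinearMap.range (adjM n).mulVecLin) = 2 * m := by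
    rw [finrank_range_adjM_odd hodd (by omega)]
    omega
  have h2 : finrank (ZMod 2) W ≤ 2 * m := finrank_span_vfam_le
  have h4 : LinearMap.range (adjM n).mulVecLin = W :=
    Submodule.eq_of_le_of_finrank_le h1 (by rw [h3]; exact h2)
  have h5 : LinearIndependent (ZMod 2) (vfam B) := by
    rw [linearIndependent_iff_card_eq_finrank_span]
    rw [Set.finrank, ← hW, ← h4, h3, Fintype.card_sum, Fintype.card_fin]
    omega
  -- x j is in the range, hence fixed by adjM
  have hxW : ∀ j : Fin m, xInd B j ∈ W := fun j => Submodule.subset_span ⟨Sum.inl j, rfl⟩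
  set j : Fin m := ⟨0, by omega⟩
  obtain ⟨z, hz⟩ : ∃ z, (adjM n).mulVec z = xInd B j := by
    have := (h4 ▸ hxW j : xInd B j ∈ LinearMap.range (adjM n).mulVecLin)
    obtain ⟨z, hz⟩ := this
    exact ⟨z, hz⟩
  have hfix : (adjM n).mulVec (xInd B j) = xInd B j := by
    conv_lhs => rw [← hz]
    rw [mulVec_idem hodd, hz]
  -- expansion of x j in the basis
  set g : Fin m ⊕ Fin m → ZMod 2 :=
    Sum.elim (fun i => (yInd B i ⬝ᵥ xInd B j) + (if i = j then 1 else 0))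
      (fun i => xInd B i ⬝ᵥ xInd B j) with hg
  have hgsum : ∑ i, g i • vfam B i = 0 := by
    have hexp : ∑ i, g i • vfam B i = (adjM n).mulVec (xInd B j) + xInd B j := by
      funext u
      rw [Finset.sum_apply, Fintype.sum_sum_type]
      simp only [hg, Sum.elim_inl, Sum.elim_inr, vfam, Pi.smul_apply, smul_eq_mul,
        Pi.add_apply]
      have e1 : ∀ i : Fin m,
          ((yInd B i ⬝ᵥ xInd B j) + (if i = j then 1 else 0)) * xInd B i u
            = (yInd B i ⬝ᵥ xInd B j) * xInd B i u + (if i = j then xInd B i u else 0) :=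
        fun i => by rw [add_mul, ite_mul, one_mul, zero_mul]
      rw [Finset.sum_congr rfl fun i _ => e1 i, Finset.sum_add_distrib,
        Finset.sum_ite_eq' Finset.univ j (fun i => xInd B i u), if_pos (Finset.mem_univ j)]
      rw [keyC h (xInd B j) u, Finset.sum_add_distrib]
      have c1 : (∑ i : Fin m, (yInd B i ⬝ᵥ xInd B j) * xInd B i u)
          = ∑ i : Fin m, xInd B i u * (yInd B i ⬝ᵥ xInd B j) :=
        Finset.sum_congr rfl fun i _ => mul_comm _ _
      have c2 : (∑ i : Fin m, (xInd B i ⬝ᵥ xInd B j) * yInd B i u)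
          = ∑ i : Fin m, yInd B i u * (xInd B i ⬝ᵥ xInd B j) :=
        Finset.sum_congr rfl fun i _ => mul_comm _ _
      rw [c1, c2]
      abel
    rw [hexp]
    funext u
    rw [Pi.add_apply, congrFun hfix u, CharTwo.add_self_eq_zero]
    rfl
  have hzero := Fintype.linearIndependent_iff.mp h5 g hgsum (Sum.inl j)
  rw [hg] at hzero
  simp only [Sum.elim_inl, if_pos rfl] at hzero
  rw [yx_dot_zero h j] at hzero
  simp at hzero

lemma lower_odd (hn : Odd n) (h3 : 3 ≤ n) (h : Good B) : n + 1 ≤ 2 * m := by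
  by_contra hcon
  push_neg at hcon
  have hb : n - 1 ≤ 2 * m := by
    have h1 := range_le_span h
    have h2 := Submodule.finrank_mono h1
    rw [finrank_range_adjM_odd hn (by omega)] at h2
    exact h2.trans finrank_span_vfam_le
  obtain ⟨l, hl⟩ := hn
  have hnm : n = 2 * m + 1 := by omega
  exact no_half_cover hnm (by omega) h

end Lower3

section Assembly

lemma b2_eq_of {n t : ℕ}
    (hub : ∃ B : Fin t → Finset (Fin n) × Finset (Fin n), IsOddCover (⊤ : SimpleGraph (Fin n)) B)
    (hlb : ∀ (m : ℕ) (B : Fin m → Finset (Fin n) × Finset (Fin n)),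
      IsOddCover (⊤ : SimpleGraph (Fin n)) B → t ≤ m) :
    b2 (⊤ : SimpleGraph (Fin n)) = t := by
  unfold b2
  refine le_antisymm (Nat.sInf_le hub) (le_csInf ⟨t, hub⟩ ?_)
  rintro m ⟨B, hB⟩
  exact hlb m B hB

variable (k : ℕ)

/-- the cover of `K_{8k}` transported to `Fin (8k)`, still indexed by `Fin k × Fin 4`. -/
def cover8k : (Fin k × Fin 4) → Finset (Fin (8 * k)) × Finset (Fin (8 * k)) :=
  fun i => (((blockCover k i).1.map (finProdFinEquiv.trans
                (finCongr (by ring : k * 8 = 8 * k))).toEmbedding),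
            ((blockCover k i).2.map (finProdFinEquiv.trans
                (finCongr (by ring : k * 8 = 8 * k))).toEmbedding))

lemma good_cover8k : Good (cover8k k) :=
  (good_blockCover k).vmap (finProdFinEquiv.trans (finCongr (by ring : k * 8 = 8 * k)))

def idxEquiv : Fin (4 * k) ≃ Fin k × Fin 4 :=
  (finCongr (by ring : 4 * k = k * 4)).trans finProdFinEquiv.symm

lemma upper_8k : ∃ B : Fin (4 * k) → Finset (Fin (8 * k)) × Finset (Fin (8 * k)),
    IsOddCover (⊤ : SimpleGraph (Fin (8 * k))) B :=
  ⟨_, (isOddCover_top_iff _).mpr ((good_cover8k k).reindex (idxEquiv k))⟩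

lemma upper_8k_sub_one (hk : 1 ≤ k) :
    ∃ B : Fin (4 * k) → Finset (Fin (8 * k - 1)) × Finset (Fin (8 * k - 1)),
      IsOddCover (⊤ : SimpleGraph (Fin (8 * k - 1))) B :=
  ⟨_, (isOddCover_top_iff _).mpr
    (((good_cover8k k).comap (Fin.castLEEmb (by omega : 8 * k - 1 ≤ 8 * k))).reindex
      (idxEquiv k))⟩

def idxEquiv' : Fin (4 * k + 1) ≃ (Fin k × Fin 4) ⊕ Fin 1 :=
  (finSumFinEquiv.symm.trans (Equiv.sumCongr (idxEquiv k) (Equiv.refl (Fin 1))))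

lemma upper_8k_add_one :
    ∃ B : Fin (4 * k + 1) → Finset (Fin (8 * k + 1)) × Finset (Fin (8 * k + 1)),
      IsOddCover (⊤ : SimpleGraph (Fin (8 * k + 1))) B :=
  ⟨_, (isOddCover_top_iff _).mpr
    (((good_cover8k k).cone.vmap (finSuccEquiv (8 * k)).symm).reindex (idxEquiv' k))⟩

end Assembly

end OddAux


theorem stmt19 (k : ℕ) (hk : 1 ≤ k) :
    b2 (⊤ : SimpleGraph (Fin (8 * k - 1))) = 4 * k ∧
    b2 (⊤ : SimpleGraph (Fin (8 * k))) = 4 * k ∧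
    b2 (⊤ : SimpleGraph (Fin (8 * k + 1))) = 4 * k + 1 := by
  refine ⟨?_, ?_, ?_⟩
  · refine OddAux.b2_eq_of (OddAux.upper_8k_sub_one k hk) ?_
    intro m B hB
    have hg : OddAux.Good B := (OddAux.isOddCover_top_iff B).mp hB
    have hodd : Odd (8 * k - 1) := ⟨4 * k - 1, by omega⟩
    have := OddAux.lower_odd hodd (by omega) hg
    omega
  · refine OddAux.b2_eq_of (OddAux.upper_8k k) ?_
    intro m B hB
    have hg : OddAux.Good B := (OddAux.isOddCover_top_iff B).mp hB
    have := OddAux.lower_even ⟨4 * k, by ring⟩ hg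
    omega
  · refine OddAux.b2_eq_of (OddAux.upper_8k_add_one k) ?_
    intro m B hB
    have hg : OddAux.Good B := (OddAux.isOddCover_top_iff B).mp hB
    have hodd : Odd (8 * k + 1) := ⟨4 * k, by omega⟩
    have := OddAux.lower_odd hodd (by omega) hg
    omega
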